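/- arXiv:1803.02942 — 3 statements merged into one kernel-verified Lean document; each statement's English description precedes it below -/
import Mathlib

section
/- Let λ be a composition of d into n nonnegative parts. For every 1 ≤ i ≤ n−1 and r, s ≥ 0, the identity E_i^{(r)} ∘ F_i^{(s)} = Σ_{t≥0} C(λ_i − λ_{i+1} + r − s, t) · F_i^{(s−t)} ∘ E_i^{(r−t)} holds as ℂ-linear maps M^λ → M^{λ+rα_i−sα_i}, where for an integer a and t ≥ 0 the generalized binomial coefficient is C(a, t) = a(a−1)⋯(a−t+1)/t!, and terms with a negative superscript are zero. -/
open Finsupp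

/-- The ambient free ℂ-vector space on all functions `Fin d → Fin n`. -/
abbrev Amb (d n : ℕ) : Type := (Fin d → Fin n) →₀ ℂ

/-- The `i`-th cell `T^i` of a function `T : Fin d → Fin n`. -/
def cell {d n : ℕ} (T : Fin d → Fin n) (i : Fin n) : Finset (Fin d) :=
  Finset.univ.filter fun x => T x = i

/-- `T` is a `λ`-tabloid: the `i`-th cell has `λ i` elements. -/
def IsTabloid {d n : ℕ} (lam : Fin n → ℕ) (T : Fin d → Fin n) : Prop :=
  ∀ i, (cell T i).card = lam i

/-- The permutation module `M^λ`: the span of the `λ`-tabloids inside the ambient module. -/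
noncomputable def Mmod (d n : ℕ) (lam : Fin n → ℕ) : Submodule ℂ (Amb d n) :=
  Submodule.span ℂ {v | ∃ T, IsTabloid lam T ∧ v = Finsupp.single T 1}

/-- `c_{i,R} T`: move every element of `R` into the `i`-th cell. -/
def cmod {d n : ℕ} (i : Fin n) (R : Finset (Fin d)) (T : Fin d → Fin n) : Fin d → Fin n :=
  fun x => if x ∈ R then i else T x

/-- The divided power `E_i^{(r)}`, defined on tabloids by
`E_i^{(r)} T = ∑_{R ⊆ T^{i+1}, |R| = r} c_{i,R} T`. -/
noncomputable def Emap (d n : ℕ) (i : ℕ) (h : i + 1 < n) (r : ℕ) : Amb d n →ₗ[ℂ] Amb d n :=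
  Finsupp.lift (Amb d n) ℂ (Fin d → Fin n) fun T =>
    ∑ R ∈ (cell T ⟨i + 1, h⟩).powersetCard r,
      Finsupp.single (cmod ⟨i, Nat.lt_of_succ_lt h⟩ R T) 1

/-- The divided power `F_i^{(r)}`, defined on tabloids by
`F_i^{(r)} T = ∑_{R ⊆ T^{i}, |R| = r} c_{i+1,R} T`. -/
noncomputable def Fmap (d n : ℕ) (i : ℕ) (h : i + 1 < n) (r : ℕ) : Amb d n →ₗ[ℂ] Amb d n :=
  Finsupp.lift (Amb d n) ℂ (Fin d → Fin n) fun T =>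
    ∑ R ∈ (cell T ⟨i, Nat.lt_of_succ_lt h⟩).powersetCard r,
      Finsupp.single (cmod ⟨i + 1, h⟩ R T) 1

/-- The generalized binomial coefficient `C(a, t) = a(a-1)⋯(a-t+1)/t!` for `a ∈ ℤ`,
as a complex scalar. -/
noncomputable def genBinom (a : ℤ) (t : ℕ) : ℂ :=
  (∏ k ∈ Finset.range t, ((a : ℂ) - (k : ℂ))) / (t.factorial : ℂ)

/- ## Scalar lemmas -/

lemma descPoch_eval (x : ℂ) (n : ℕ) :
    (descPochhammer ℤ n).smeval x = ∏ k ∈ Finset.range n, (x - k) := by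
  induction n with
  | zero => simp [Polynomial.smeval]
  | succ n ih =>
      rw [descPochhammer_succ_right, Finset.prod_range_succ, ← ih]
      simp [Polynomial.smeval_mul, Polynomial.smeval_sub, Polynomial.smeval_natCast]

lemma genBinom_eq (a : ℤ) (t : ℕ) : genBinom a t = Ring.choose (a : ℂ) t := by
  have h := Ring.descPochhammer_eq_factorial_smul_choose (R := ℂ) (a : ℂ) t
  rw [descPoch_eval] at h
  rw [genBinom, h]
  field_simp [Nat.factorial_ne_zero]
  rw [nsmul_eq_mul]

lemma vander (a' b' m : ℕ) :
    (a'.choose m : ℂ) =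
      ∑ t ∈ Finset.range (m + 1), genBinom ((a' : ℤ) - b') t * (b'.choose (m - t) : ℂ) := by
  have key : ((a' : ℂ)) = (((a' : ℤ) - b' : ℤ) : ℂ) + (b' : ℂ) := by push_cast; ring
  have h2 := Ring.add_choose_eq (R := ℂ) (r := (((a' : ℤ) - b' : ℤ) : ℂ)) (s := (b' : ℂ)) m
    (Commute.all _ _)
  rw [← key, Ring.choose_natCast] at h2
  rw [h2, Finset.Nat.sum_antidiagonal_eq_sum_range_succ_mk]
  refine Finset.sum_congr rfl fun t ht => ?_
  rw [genBinom_eq, Ring.choose_natCast]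

lemma scalars (a b p q r s : ℕ) (hpa : p ≤ a) (hqb : q ≤ b) :
    (if p ≤ s ∧ q + s = p + r then ((a - p).choose (s - p) : ℂ) else 0) =
      ∑ t ∈ Finset.range (min r s + 1),
        genBinom ((a : ℤ) - b + r - s) t *
          (if p ≤ s - t ∧ q + (s - t) = p + (r - t) then ((b - q).choose (s - t - p) : ℂ)
            else 0) := by
  by_cases hc : p ≤ s ∧ q + s = p + r
  · obtain ⟨h1, h2⟩ := hc
    rw [if_pos ⟨h1, h2⟩]
    have hm : s - p ≤ min r s := by omega
    have hcast : (((a - p : ℕ) : ℤ) - ((b - q : ℕ) : ℤ)) = (a : ℤ) - b + r - s := by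
      push_cast [hpa, hqb]; omega
    have hv := vander (a - p) (b - q) (s - p)
    rw [hcast] at hv
    have hsub : Finset.range (s - p + 1) ⊆ Finset.range (min r s + 1) :=
      Finset.range_subset_range.mpr (by omega)
    rw [← Finset.sum_subset hsub (fun t ht hnt => ?_)]
    · rw [hv]
      refine Finset.sum_congr rfl fun t ht => ?_
      have ht' : t ≤ s - p := by simpa [Nat.lt_succ_iff] using ht
      rw [if_pos ⟨by omega, by omega⟩, show s - t - p = s - p - t from by omega]
    · have ht1 : t ≤ min r s := by simpa [Nat.lt_succ_iff] using ht
      have ht2 : ¬ t ≤ s - p := by simpa [Nat.lt_succ_iff] using hnt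
      rw [if_neg (by omega), mul_zero]
  · rw [if_neg hc]
    refine (Finset.sum_eq_zero fun t ht => ?_).symm
    have ht1 : t ≤ min r s := by simpa [Nat.lt_succ_iff] using ht
    rw [if_neg (by omega), mul_zero]

/- ## Set lemmas -/

lemma mem_cell {d n : ℕ} {T : Fin d → Fin n} {x : Fin d} {j : Fin n} :
    x ∈ cell T j ↔ T x = j := by simp [cell]

lemma cell_disjoint {d n : ℕ} {T : Fin d → Fin n} {j k : Fin n} (hjk : j ≠ k) :
    Disjoint (cell T j) (cell T k) := by
  rw [Finset.disjoint_left]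
  intro x hx hx'
  exact hjk ((mem_cell.mp hx).symm.trans (mem_cell.mp hx'))

lemma cell_cmod_self {d n : ℕ} (j : Fin n) (R : Finset (Fin d)) (T : Fin d → Fin n) :
    cell (cmod j R T) j = cell T j ∪ R := by
  ext x
  by_cases hx : x ∈ R <;> simp [cell, cmod, hx]

def Ufun {d n : ℕ} (jF jS : Fin n) (P Q : Finset (Fin d)) (T : Fin d → Fin n) :
    Fin d → Fin n :=
  fun x => if x ∈ Q then jF else if x ∈ P then jS else T x

lemma comp1 {d n : ℕ} {jF jS : Fin n} {T : Fin d → Fin n} {S R : Finset (Fin d)}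
    (hS : S ⊆ cell T jF) (_hR : R ⊆ cell T jS ∪ S) :
    cmod jF R (cmod jS S T) = Ufun jF jS (S \ R) (R \ S) T := by
  funext x
  by_cases hxR : x ∈ R <;> by_cases hxS : x ∈ S <;>
    simp [cmod, Ufun, hxR, hxS]
  exact (mem_cell.mp (hS hxS)).symm

lemma comp2 {d n : ℕ} {jF jS : Fin n} {T : Fin d → Fin n} {R' S' : Finset (Fin d)}
    (hR' : R' ⊆ cell T jS) (hS' : S' ⊆ cell T jF ∪ R') :
    cmod jS S' (cmod jF R' T) = Ufun jF jS (S' ∩ cell T jF) (R' \ S') T := by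
  funext x
  by_cases hxS : x ∈ S' <;> by_cases hxR : x ∈ R' <;>
    simp [cmod, Ufun, hxS, hxR]
  · -- x ∈ S', x ∈ R' : LHS jS, RHS: if x ∈ cell T jF then jS else T x, with T x = jS
    by_cases hxA : x ∈ cell T jF
    · simp [hxA]
    · simp [hxA, (mem_cell.mp (hR' hxR)).symm]
  · -- x ∈ S', x ∉ R' : x ∈ cell T jF
    have hxA : x ∈ cell T jF := by
      rcases Finset.mem_union.mp (hS' hxS) with h' | h'
      · exact h'
      · exact absurd h' hxR
    simp [hxA]

lemma union_sdiff_union {d : ℕ} {P Q K : Finset (Fin d)} (hPQ : Disjoint P Q)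
    (hPK : Disjoint P K) : (P ∪ K) \ (Q ∪ K) = P := by
  ext x
  simp only [Finset.mem_sdiff, Finset.mem_union, not_or]
  constructor
  · rintro ⟨h1 | h1, _, h3⟩
    · exact h1
    · exact absurd h1 h3
  · intro hx
    exact ⟨Or.inl hx, Finset.disjoint_left.mp hPQ hx, Finset.disjoint_left.mp hPK hx⟩

lemma union_inter_union {d : ℕ} {P Q K : Finset (Fin d)} (hPQ : Disjoint P Q) :
    (P ∪ K) ∩ (Q ∪ K) = K := by
  ext x
  simp only [Finset.mem_inter, Finset.mem_union]
  constructor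
  · rintro ⟨h1 | h1, h2 | h2⟩
    · exact absurd h2 (Finset.disjoint_left.mp hPQ h1)
    · exact h2
    · exact h1
    · exact h1
  · intro hx
    exact ⟨Or.inr hx, Or.inr hx⟩

/- ## Counting lemmas -/

lemma count1 {d : ℕ} {A B P Q : Finset (Fin d)} (hAB : Disjoint A B) (r s : ℕ)
    (hP : P ⊆ A) (hQ : Q ⊆ B) :
    (((A.powersetCard s).sigma fun S => (B ∪ S).powersetCard r).filter
        fun x => (x.1 \ x.2, x.2 \ x.1) = (P, Q)).card =
      if P.card ≤ s ∧ Q.card + s = P.card + r then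
        (A.card - P.card).choose (s - P.card) else 0 := by
  have hPQ : Disjoint P Q := hAB.mono hP hQ
  split_ifs with hc
  · obtain ⟨h1, h2⟩ := hc
    rw [show A.card - P.card = (A \ P).card from (Finset.card_sdiff_of_subset hP).symm,
      ← Finset.card_powersetCard]
    refine Finset.card_nbij' (fun x => x.1 ∩ x.2) (fun K => ⟨P ∪ K, Q ∪ K⟩) ?_ ?_ ?_ ?_
    · intro x hx
      beta_reduce
      simp only [Finset.mem_coe, Finset.mem_filter, Finset.mem_sigma, Finset.mem_powersetCard,
        Prod.mk.injEq] at hx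
      obtain ⟨⟨⟨hSsub, hScard⟩, hRsub, hRcard⟩, hPe, hQe⟩ := hx
      rw [Finset.mem_coe, Finset.mem_powersetCard]
      constructor
      · intro y hy
        rw [Finset.mem_inter] at hy
        rw [Finset.mem_sdiff]
        refine ⟨hSsub hy.1, ?_⟩
        rw [← hPe, Finset.mem_sdiff]
        push_neg
        intro _; exact hy.2
      · have := Finset.card_sdiff_add_card_inter x.1 x.2
        rw [hPe, hScard] at this
        omega
    · intro K hK
      beta_reduce
      rw [Finset.mem_coe, Finset.mem_powersetCard] at hK
      obtain ⟨hKsub, hKcard⟩ := hK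
      have hKA : K ⊆ A := hKsub.trans (Finset.sdiff_subset)
      have hPK : Disjoint P K := by
        rw [Finset.disjoint_right]
        intro y hy
        exact (Finset.mem_sdiff.mp (hKsub hy)).2
      have hQK : Disjoint Q K := hAB.symm.mono hQ hKA
      simp only [Finset.mem_coe, Finset.mem_filter, Finset.mem_sigma, Finset.mem_powersetCard,
        Prod.mk.injEq]
      refine ⟨⟨⟨Finset.union_subset hP hKA, ?_⟩, ?_, ?_⟩, ?_, ?_⟩
      · rw [Finset.card_union_of_disjoint hPK]; omega
      · exact Finset.union_subset (hQ.trans Finset.subset_union_left)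
          (Finset.subset_union_right.trans Finset.subset_union_right)
      · rw [Finset.card_union_of_disjoint hQK]; omega
      · exact union_sdiff_union hPQ hPK
      · exact union_sdiff_union hPQ.symm hQK
    · intro x hx
      beta_reduce
      simp only [Finset.mem_coe, Finset.mem_filter, Finset.mem_sigma, Finset.mem_powersetCard,
        Prod.mk.injEq] at hx
      obtain ⟨_, hPe, hQe⟩ := hx
      have e1 : P ∪ (x.1 ∩ x.2) = x.1 := by rw [← hPe, Finset.sdiff_union_inter]
      have e2 : Q ∪ (x.1 ∩ x.2) = x.2 := by
        rw [← hQe, Finset.inter_comm, Finset.sdiff_union_inter]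
      rw [e1, e2]
    · intro K hK
      rw [Finset.mem_coe, Finset.mem_powersetCard] at hK
      exact union_inter_union hPQ
  · rw [Finset.card_eq_zero, Finset.filter_eq_empty_iff]
    intro x hx
    simp only [Finset.mem_sigma, Finset.mem_powersetCard] at hx
    obtain ⟨⟨hSsub, hScard⟩, hRsub, hRcard⟩ := hx
    intro hcon
    rw [Prod.mk.injEq] at hcon
    obtain ⟨hPe, hQe⟩ := hcon
    have e1 := Finset.card_sdiff_add_card_inter x.1 x.2
    have e2 := Finset.card_sdiff_add_card_inter x.2 x.1
    rw [hPe, hScard] at e1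
    rw [hQe, Finset.inter_comm, hRcard] at e2
    exact hc ⟨by omega, by omega⟩

lemma count2 {d : ℕ} {A B P Q : Finset (Fin d)} (hAB : Disjoint A B) (r' s' : ℕ)
    (hP : P ⊆ A) (hQ : Q ⊆ B) :
    (((B.powersetCard r').sigma fun R' => (A ∪ R').powersetCard s').filter
        fun x => (x.2 ∩ A, x.1 \ x.2) = (P, Q)).card =
      if P.card ≤ s' ∧ Q.card + s' = P.card + r' then
        (B.card - Q.card).choose (s' - P.card) else 0 := by
  have hPQ : Disjoint P Q := hAB.mono hP hQ
  -- key : for x in the sigma set, x.2 \ A = x.2 ∩ x.1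
  have key : ∀ x : (_ : Finset (Fin d)) × Finset (Fin d),
      x.1 ⊆ B → x.2 ⊆ A ∪ x.1 → x.2 \ A = x.2 ∩ x.1 := by
    intro x hx1 hx2
    ext y
    simp only [Finset.mem_sdiff, Finset.mem_inter]
    constructor
    · intro ⟨hy1, hy2⟩
      rcases Finset.mem_union.mp (hx2 hy1) with h' | h'
      · exact absurd h' hy2
      · exact ⟨hy1, h'⟩
    · intro ⟨hy1, hy2⟩
      exact ⟨hy1, Finset.disjoint_right.mp hAB (hx1 hy2)⟩
  split_ifs with hc
  · obtain ⟨h1, h2⟩ := hc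
    rw [show B.card - Q.card = (B \ Q).card from (Finset.card_sdiff_of_subset hQ).symm,
      ← Finset.card_powersetCard]
    refine Finset.card_nbij' (fun x => x.1 ∩ x.2) (fun L => ⟨Q ∪ L, P ∪ L⟩) ?_ ?_ ?_ ?_
    · intro x hx
      beta_reduce
      simp only [Finset.mem_coe, Finset.mem_filter, Finset.mem_sigma, Finset.mem_powersetCard,
        Prod.mk.injEq] at hx
      obtain ⟨⟨⟨hRsub, hRcard⟩, hSsub, hScard⟩, hPe, hQe⟩ := hx
      have hkey := key x hRsub hSsub
      rw [Finset.mem_coe, Finset.mem_powersetCard]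
      constructor
      · intro y hy
        rw [Finset.mem_inter] at hy
        rw [Finset.mem_sdiff]
        refine ⟨hRsub hy.1, ?_⟩
        rw [← hQe, Finset.mem_sdiff]
        push_neg
        intro _; exact hy.2
      · have e1 := Finset.card_inter_add_card_sdiff x.2 A
        rw [hkey, hPe, hScard] at e1
        have : (x.2 ∩ x.1).card = (x.1 ∩ x.2).card := by rw [Finset.inter_comm]
        omega
    · intro L hL
      beta_reduce
      rw [Finset.mem_coe, Finset.mem_powersetCard] at hL
      obtain ⟨hLsub, hLcard⟩ := hL
      have hLB : L ⊆ B := hLsub.trans (Finset.sdiff_subset)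
      have hQL : Disjoint Q L := by
        rw [Finset.disjoint_right]
        intro y hy
        exact (Finset.mem_sdiff.mp (hLsub hy)).2
      have hPL : Disjoint P L := hAB.mono hP hLB
      simp only [Finset.mem_coe, Finset.mem_filter, Finset.mem_sigma, Finset.mem_powersetCard,
        Prod.mk.injEq]
      refine ⟨⟨⟨Finset.union_subset hQ hLB, ?_⟩, ?_, ?_⟩, ?_, ?_⟩
      · rw [Finset.card_union_of_disjoint hQL]; omega
      · exact Finset.union_subset (hP.trans Finset.subset_union_left)
          (Finset.subset_union_right.trans Finset.subset_union_right)
      · rw [Finset.card_union_of_disjoint hPL]; omega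
      · -- (P ∪ L) ∩ A = P
        ext y
        simp only [Finset.mem_inter, Finset.mem_union]
        constructor
        · rintro ⟨h' | h', hyA⟩
          · exact h'
          · exact absurd hyA (Finset.disjoint_right.mp hAB (hLB h'))
        · intro hy
          exact ⟨Or.inl hy, hP hy⟩
      · exact union_sdiff_union hPQ.symm hQL
    · intro x hx
      beta_reduce
      simp only [Finset.mem_coe, Finset.mem_filter, Finset.mem_sigma, Finset.mem_powersetCard,
        Prod.mk.injEq] at hx
      obtain ⟨⟨⟨hRsub, hRcard⟩, hSsub, hScard⟩, hPe, hQe⟩ := hx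
      have hkey := key x hRsub hSsub
      have e1 : Q ∪ (x.1 ∩ x.2) = x.1 := by rw [← hQe, Finset.sdiff_union_inter]
      have e2 : P ∪ (x.1 ∩ x.2) = x.2 := by
        rw [← hPe, Finset.inter_comm x.1 x.2, ← hkey, Finset.union_comm,
          Finset.sdiff_union_inter]
      rw [e1, e2]
    · intro L hL
      exact union_inter_union hPQ.symm
  · rw [Finset.card_eq_zero, Finset.filter_eq_empty_iff]
    intro x hx
    simp only [Finset.mem_sigma, Finset.mem_powersetCard] at hx
    obtain ⟨⟨hRsub, hRcard⟩, hSsub, hScard⟩ := hx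
    intro hcon
    rw [Prod.mk.injEq] at hcon
    obtain ⟨hPe, hQe⟩ := hcon
    have hkey := key x hRsub hSsub
    have e1 := Finset.card_inter_add_card_sdiff x.2 A
    have e2 := Finset.card_sdiff_add_card_inter x.1 x.2
    rw [hkey, hPe, hScard] at e1
    rw [hQe, hRcard] at e2
    have : (x.2 ∩ x.1).card = (x.1 ∩ x.2).card := by rw [Finset.inter_comm]
    exact hc ⟨by omega, by omega⟩

/- ## Action on single tabloids -/

lemma Emap_single (d n : ℕ) (i : ℕ) (h : i + 1 < n) (r : ℕ) (T : Fin d → Fin n) :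
    Emap d n i h r (Finsupp.single T 1) =
      ∑ R ∈ (cell T ⟨i + 1, h⟩).powersetCard r,
        Finsupp.single (cmod ⟨i, Nat.lt_of_succ_lt h⟩ R T) 1 := by
  rw [Emap, Finsupp.lift_apply, Finsupp.sum_single_index (by simp), one_smul]

lemma Fmap_single (d n : ℕ) (i : ℕ) (h : i + 1 < n) (r : ℕ) (T : Fin d → Fin n) :
    Fmap d n i h r (Finsupp.single T 1) =
      ∑ R ∈ (cell T ⟨i, Nat.lt_of_succ_lt h⟩).powersetCard r,
        Finsupp.single (cmod ⟨i + 1, h⟩ R T) 1 := by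
  rw [Fmap, Finsupp.lift_apply, Finsupp.sum_single_index (by simp), one_smul]

lemma key (d n : ℕ) (i : ℕ) (h : i + 1 < n) (r s : ℕ) (T : Fin d → Fin n) :
    Emap d n i h r (Fmap d n i h s (Finsupp.single T 1)) =
      ∑ t ∈ Finset.range (min r s + 1),
        genBinom (((cell T ⟨i, Nat.lt_of_succ_lt h⟩).card : ℤ)
            - ((cell T ⟨i + 1, h⟩).card : ℤ) + r - s) t •
          Fmap d n i h (s - t) (Emap d n i h (r - t) (Finsupp.single T 1)) := by
  classical
  have hiF : i < n := Nat.lt_of_succ_lt h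
  let jF : Fin n := ⟨i, hiF⟩
  let jS : Fin n := ⟨i + 1, h⟩
  let A : Finset (Fin d) := cell T jF
  let B : Finset (Fin d) := cell T jS
  have hne : jF ≠ jS := by
    simp only [jF, jS, ne_eq, Fin.mk.injEq]
    omega
  have hAB : Disjoint A B := cell_disjoint hne
  let D : Finset (Finset (Fin d) × Finset (Fin d)) := A.powerset ×ˢ B.powerset
  let g : Finset (Fin d) × Finset (Fin d) → Amb d n :=
    fun y => Finsupp.single (Ufun jF jS y.1 y.2 T) 1
  let σ1 : Finset ((_ : Finset (Fin d)) × Finset (Fin d)) :=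
    (A.powersetCard s).sigma fun S => (B ∪ S).powersetCard r
  let φ1 : (_ : Finset (Fin d)) × Finset (Fin d) → Finset (Fin d) × Finset (Fin d) :=
    fun x => (x.1 \ x.2, x.2 \ x.1)
  let σ2 : ℕ → Finset ((_ : Finset (Fin d)) × Finset (Fin d)) :=
    fun t => (B.powersetCard (r - t)).sigma fun R' => (A ∪ R').powersetCard (s - t)
  let φ2 : (_ : Finset (Fin d)) × Finset (Fin d) → Finset (Fin d) × Finset (Fin d) :=
    fun x => (x.2 ∩ A, x.1 \ x.2)
  -- Step 1: LHS as a sum over σ1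
  have lhs1 : Emap d n i h r (Fmap d n i h s (Finsupp.single T 1)) =
      ∑ x ∈ σ1, g (φ1 x) := by
    rw [Fmap_single, map_sum, Finset.sum_sigma]
    refine Finset.sum_congr rfl fun S hS => ?_
    rw [Finset.mem_powersetCard] at hS
    rw [Emap_single]
    rw [show cell (cmod jS S T) ⟨i + 1, h⟩ = B ∪ S from cell_cmod_self jS S T]
    refine Finset.sum_congr rfl fun R hR => ?_
    rw [Finset.mem_powersetCard] at hR
    show Finsupp.single (cmod jF R (cmod jS S T)) 1 = _
    rw [comp1 hS.1 hR.1]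
  -- Step 2: RHS summands as sums over σ2 t
  have rhs1 : ∀ t : ℕ, Fmap d n i h (s - t) (Emap d n i h (r - t) (Finsupp.single T 1)) =
      ∑ x ∈ σ2 t, g (φ2 x) := by
    intro t
    rw [Emap_single, map_sum, Finset.sum_sigma]
    refine Finset.sum_congr rfl fun R' hR' => ?_
    rw [Finset.mem_powersetCard] at hR'
    rw [Fmap_single]
    rw [show cell (cmod jF R' T) ⟨i, hiF⟩ = A ∪ R' from cell_cmod_self jF R' T]
    refine Finset.sum_congr rfl fun S' hS' => ?_
    rw [Finset.mem_powersetCard] at hS'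
    show Finsupp.single (cmod jS S' (cmod jF R' T)) 1 = _
    rw [comp2 hR'.1 hS'.1]
  -- Step 3: regroup over D
  have grp : ∀ (σ : Finset ((_ : Finset (Fin d)) × Finset (Fin d)))
      (φ : (_ : Finset (Fin d)) × Finset (Fin d) → Finset (Fin d) × Finset (Fin d)),
      (∀ x ∈ σ, φ x ∈ D) →
      ∑ x ∈ σ, g (φ x) = ∑ y ∈ D, ((σ.filter fun x => φ x = y).card : ℂ) • g y := by
    intro σ φ hmaps
    rw [Finset.sum_comp g φ]
    rw [Finset.sum_subset (fun y hy => ?_) (fun y _ hy => ?_)]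
    · refine Finset.sum_congr rfl fun y _ => ?_
      rw [Nat.cast_smul_eq_nsmul]
    · obtain ⟨x, hx, rfl⟩ := Finset.mem_image.mp hy
      exact hmaps x hx
    · have : (σ.filter fun x => φ x = y) = ∅ := by
        rw [Finset.filter_eq_empty_iff]
        intro x hx hcon
        exact hy (Finset.mem_image.mpr ⟨x, hx, hcon⟩)
      rw [this]
      simp
  have hm1 : ∀ x ∈ σ1, φ1 x ∈ D := by
    intro x hx
    simp only [σ1, Finset.mem_sigma, Finset.mem_powersetCard] at hx
    obtain ⟨⟨hSsub, _⟩, hRsub, _⟩ := hx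
    simp only [D, φ1, Finset.mem_product, Finset.mem_powerset]
    constructor
    · exact (Finset.sdiff_subset).trans hSsub
    · intro y hy
      rw [Finset.mem_sdiff] at hy
      rcases Finset.mem_union.mp (hRsub hy.1) with h' | h'
      · exact h'
      · exact absurd h' hy.2
  have hm2 : ∀ t : ℕ, ∀ x ∈ σ2 t, φ2 x ∈ D := by
    intro t x hx
    simp only [σ2, Finset.mem_sigma, Finset.mem_powersetCard] at hx
    obtain ⟨⟨hRsub, _⟩, hSsub, _⟩ := hx
    simp only [D, φ2, Finset.mem_product, Finset.mem_powerset]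
    constructor
    · exact Finset.inter_subset_right
    · exact (Finset.sdiff_subset).trans hRsub
  -- Assemble
  rw [lhs1, grp σ1 φ1 hm1]
  have rhsrw : ∀ t ∈ Finset.range (min r s + 1),
      genBinom ((A.card : ℤ) - (B.card : ℤ) + r - s) t •
        Fmap d n i h (s - t) (Emap d n i h (r - t) (Finsupp.single T 1)) =
      ∑ y ∈ D, (genBinom ((A.card : ℤ) - (B.card : ℤ) + r - s) t *
        (((σ2 t).filter fun x => φ2 x = y).card : ℂ)) • g y := by
    intro t _
    rw [rhs1 t, grp (σ2 t) φ2 (hm2 t), Finset.smul_sum]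
    refine Finset.sum_congr rfl fun y _ => ?_
    rw [smul_smul]
  rw [Finset.sum_congr rfl rhsrw, Finset.sum_comm]
  refine Finset.sum_congr rfl fun y hy => ?_
  obtain ⟨P, Q⟩ := y
  simp only [D, Finset.mem_product, Finset.mem_powerset] at hy
  obtain ⟨hP, hQ⟩ := hy
  rw [← Finset.sum_smul]
  congr 1
  have hcnt1 := count1 (P := P) (Q := Q) hAB r s hP hQ
  rw [show ((σ1.filter fun x => φ1 x = (P, Q)).card)
      = (((A.powersetCard s).sigma fun S => (B ∪ S).powersetCard r).filter
          fun x => (x.1 \ x.2, x.2 \ x.1) = (P, Q)).card from rfl, hcnt1,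
    Nat.cast_ite, Nat.cast_zero,
    scalars A.card B.card P.card Q.card r s (Finset.card_le_card hP)
      (Finset.card_le_card hQ)]
  refine Finset.sum_congr rfl fun t ht => ?_
  congr 1
  have hcnt2 := count2 (P := P) (Q := Q) hAB (r - t) (s - t) hP hQ
  rw [show (((σ2 t).filter fun x => φ2 x = (P, Q)).card)
      = ((((B.powersetCard (r - t)).sigma fun R' => (A ∪ R').powersetCard (s - t)).filter
          fun x => (x.2 ∩ A, x.1 \ x.2) = (P, Q)).card) from rfl, hcnt2,
    Nat.cast_ite, Nat.cast_zero]


/-- the commutation relation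
`E_i^{(r)} ∘ F_i^{(s)} = Σ_{t≥0} C(λ_i − λ_{i+1} + r − s, t) · F_i^{(s−t)} ∘ E_i^{(r−t)}`
as linear maps `M^λ → M^{λ+rα_i−sα_i}` (terms with a negative superscript, i.e. `t > min r s`,
are zero, so the sum is truncated at `min r s`). -/
theorem stmt8 (d n : ℕ) (lam : Fin n → ℕ) (hlam : ∑ i, lam i = d)
    (i : ℕ) (h : i + 1 < n) (r s : ℕ) :
    ∀ v ∈ Mmod d n lam,
      Emap d n i h r (Fmap d n i h s v) =
        ∑ t ∈ Finset.range (min r s + 1),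
          genBinom ((lam ⟨i, Nat.lt_of_succ_lt h⟩ : ℤ) - (lam ⟨i + 1, h⟩ : ℤ) + r - s) t •
            Fmap d n i h (s - t) (Emap d n i h (r - t) v) := by
  intro v hv
  induction hv using Submodule.span_induction with
  | mem v hv =>
      obtain ⟨T, hT, rfl⟩ := hv
      have := key d n i h r s T
      rw [hT ⟨i, Nat.lt_of_succ_lt h⟩, hT ⟨i + 1, h⟩] at this
      exact this
  | zero => simp
  | add x y _ _ hx hy =>
      simp only [map_add, hx, hy, ← Finset.sum_add_distrib, smul_add]
  | smul c x _ hx =>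
      simp only [map_smul, hx, Finset.smul_sum]
      refine Finset.sum_congr rfl fun t _ => ?_
      rw [smul_comm]
end

section
/- Let λ be a composition of d into m nonnegative parts and μ a composition of d into n nonnegative parts. For an A-tabloid S (a function {1,…,d} → {1,…,m}×{1,…,n}), a cell index (i,j) and a subset R ⊆ {1,…,d}, let c_{(i,j),R}S be the tabloid equal to (i,j) on R and equal to S elsewhere. For 1 ≤ i ≤ m and 1 ≤ j ≤ n−1, define ℂ-linear maps on the free ℂ-vector space on matrix tabloids by E_{ij}(S) = Σ_{k ∈ S⁻¹(i,j+1)} c_{(i,j),{k}}S and F_{ij}(S) = Σ_{k ∈ S⁻¹(i,j)} c_{(i,j+1),{k}}S. Let T be a λ-tabloid and T' a μ-tabloid, and write T⊗T' for the matrix tabloid x ↦ (T(x), T'(x)). Then for each 1 ≤ j ≤ n−1: Σ_{k ∈ T'^{j+1}} T ⊗ (c_{j,{k}}T') = Σ_{i=1}^{m} E_{ij}(T⊗T') and Σ_{k ∈ T'^{j}} T ⊗ (c_{j+1,{k}}T') = Σ_{i=1}^{m} F_{ij}(T⊗T'). -/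
open Finsupp

/-- `c_{i,{k}} T`: move the element `k` into the `i`-th cell. -/
def cOne {d n : ℕ} (i : Fin n) (k : Fin d) (T : Fin d → Fin n) : Fin d → Fin n :=
  fun x => if x = k then i else T x

/-- The ambient free ℂ-vector space on matrix tabloids (functions
`{1,…,d} → {1,…,m} × {1,…,n}`). -/
abbrev AmbP (d m n : ℕ) : Type := (Fin d → Fin m × Fin n) →₀ ℂ

/-- `c_{(i,j),{k}} S` for a matrix tabloid `S`: move `k` into the `(i,j)`-cell. -/
def cOneP {d m n : ℕ} (p : Fin m × Fin n) (k : Fin d) (S : Fin d → Fin m × Fin n) :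
    Fin d → Fin m × Fin n :=
  fun x => if x = k then p else S x

/-- `E_{ij}(S) = Σ_{k ∈ S⁻¹(i,j+1)} c_{(i,j),{k}} S`, extended linearly. -/
noncomputable def EmatP (d m n : ℕ) (i : Fin m) (j : ℕ) (hj : j + 1 < n) :
    AmbP d m n →ₗ[ℂ] AmbP d m n :=
  Finsupp.lift (AmbP d m n) ℂ (Fin d → Fin m × Fin n) fun S =>
    ∑ k ∈ Finset.univ.filter (fun x => S x = (i, ⟨j + 1, hj⟩)),
      Finsupp.single (cOneP (i, ⟨j, Nat.lt_of_succ_lt hj⟩) k S) 1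

/-- `F_{ij}(S) = Σ_{k ∈ S⁻¹(i,j)} c_{(i,j+1),{k}} S`, extended linearly. -/
noncomputable def FmatP (d m n : ℕ) (i : Fin m) (j : ℕ) (hj : j + 1 < n) :
    AmbP d m n →ₗ[ℂ] AmbP d m n :=
  Finsupp.lift (AmbP d m n) ℂ (Fin d → Fin m × Fin n) fun S =>
    ∑ k ∈ Finset.univ.filter (fun x => S x = (i, ⟨j, Nat.lt_of_succ_lt hj⟩)),
      Finsupp.single (cOneP (i, ⟨j + 1, hj⟩) k S) 1


lemma auxSum {d m n : ℕ} (T : Fin d → Fin m) (T' : Fin d → Fin n) (a b : Fin n) :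
    (∑ k ∈ Finset.univ.filter (fun x => T' x = b),
        Finsupp.single (fun x => (T x, if x = k then a else T' x)) (1 : ℂ)) =
      ∑ i : Fin m, ∑ k ∈ Finset.univ.filter (fun x => (T x, T' x) = (i, b)),
        Finsupp.single (cOneP (i, a) k (fun x => (T x, T' x))) 1 := by
  simp only [Finset.sum_filter]
  rw [Finset.sum_comm]
  refine Finset.sum_congr rfl fun k _ => ?_
  by_cases hb : T' k = b
  · have key : ∀ i : Fin m,
        (if (T k, T' k) = (i, b) then
          Finsupp.single (cOneP (i, a) k (fun x => (T x, T' x))) (1:ℂ) else 0)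
        = if i = T k then
            Finsupp.single (cOneP (T k, a) k (fun x => (T x, T' x))) (1:ℂ) else 0 := by
      intro i
      by_cases hi : i = T k
      · subst hi; simp [hb]
      · rw [if_neg, if_neg hi]
        intro h
        exact hi (congrArg Prod.fst h).symm
    simp only [key]
    rw [Finset.sum_ite_eq' Finset.univ (T k)
      (fun _ => Finsupp.single (cOneP (T k, a) k (fun x => (T x, T' x))) (1:ℂ))]
    simp only [Finset.mem_univ, if_true, hb, if_true]
    congr 1
    funext x
    simp only [cOneP]
    split <;> simp_all
  · rw [if_neg hb]
    refine (Finset.sum_eq_zero fun i _ => ?_).symm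
    rw [if_neg]
    intro h
    exact hb (congrArg Prod.snd h)

/-- for a `λ`-tabloid `T` and a `μ`-tabloid `T'`, writing `T⊗T'` for the
matrix tabloid `x ↦ (T x, T' x)`, we have for each `1 ≤ j ≤ n−1`:
`Σ_{k ∈ T'^{j+1}} T ⊗ (c_{j,{k}}T') = Σ_{i=1}^{m} E_{ij}(T⊗T')` and
`Σ_{k ∈ T'^{j}} T ⊗ (c_{j+1,{k}}T') = Σ_{i=1}^{m} F_{ij}(T⊗T')`. -/
theorem stmt15 (d m n : ℕ) (lam : Fin m → ℕ) (mu : Fin n → ℕ)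
    (hlam : ∑ i, lam i = d) (hmu : ∑ j, mu j = d)
    (T : Fin d → Fin m) (hT : IsTabloid lam T)
    (T' : Fin d → Fin n) (hT' : IsTabloid mu T')
    (j : ℕ) (hj : j + 1 < n) :
    (∑ k ∈ cell T' ⟨j + 1, hj⟩,
        Finsupp.single (fun x => (T x, cOne ⟨j, Nat.lt_of_succ_lt hj⟩ k T' x)) (1 : ℂ)) =
      ∑ i : Fin m, EmatP d m n i j hj (Finsupp.single (fun x => (T x, T' x)) 1) ∧
    (∑ k ∈ cell T' ⟨j, Nat.lt_of_succ_lt hj⟩,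
        Finsupp.single (fun x => (T x, cOne ⟨j + 1, hj⟩ k T' x)) (1 : ℂ)) =
      ∑ i : Fin m, FmatP d m n i j hj (Finsupp.single (fun x => (T x, T' x)) 1) := by
  have hE : ∀ i : Fin m, EmatP d m n i j hj (Finsupp.single (fun x => (T x, T' x)) 1)
      = ∑ k ∈ Finset.univ.filter
            (fun x => ((fun x => (T x, T' x)) x) = (i, (⟨j + 1, hj⟩ : Fin n))),
          Finsupp.single (cOneP (i, ⟨j, Nat.lt_of_succ_lt hj⟩) k (fun x => (T x, T' x))) 1 := by
    intro i
    simp [EmatP, Finsupp.lift_apply, Finsupp.sum_single_index]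
  have hF : ∀ i : Fin m, FmatP d m n i j hj (Finsupp.single (fun x => (T x, T' x)) 1)
      = ∑ k ∈ Finset.univ.filter
            (fun x => ((fun x => (T x, T' x)) x) = (i, (⟨j, Nat.lt_of_succ_lt hj⟩ : Fin n))),
          Finsupp.single (cOneP (i, ⟨j + 1, hj⟩) k (fun x => (T x, T' x))) 1 := by
    intro i
    simp [FmatP, Finsupp.lift_apply, Finsupp.sum_single_index]
  constructor
  · simp only [hE]
    exact auxSum T T' ⟨j, Nat.lt_of_succ_lt hj⟩ ⟨j + 1, hj⟩
  · simp only [hF]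
    exact auxSum T T' ⟨j + 1, hj⟩ ⟨j, Nat.lt_of_succ_lt hj⟩
end

section
/- Let λ = (λ_1,…,λ_n) and λ' = (λ'_1,…,λ'_{n'}) be compositions of d with all parts strictly positive. Then M^λ and M^{λ'} are isomorphic as right ℂ[S_d]-modules if and only if n = n' and λ' is a rearrangement of λ, i.e. λ'_i = λ_{σ(i)} for some permutation σ of {1,…,n}. -/
open Finsupp

lemma cell_comp_map {d n : ℕ} (T : Fin d → Fin n) (g : Equiv.Perm (Fin d)) (i : Fin n) :
    (cell (T ∘ ⇑g) i).map g.toEmbedding = cell T i := by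
  ext y
  simp only [cell, Finset.mem_map, Finset.mem_filter, Finset.mem_univ, true_and,
    Function.comp_apply, Equiv.coe_toEmbedding]
  constructor
  · rintro ⟨x, hx, rfl⟩; exact hx
  · intro hy; exact ⟨g.symm y, by simpa using hy, by simp⟩

lemma IsTabloid.comp {d n : ℕ} {lam : Fin n → ℕ} {T : Fin d → Fin n}
    (hT : IsTabloid lam T) (g : Equiv.Perm (Fin d)) : IsTabloid lam (T ∘ ⇑g) := by
  intro i
  calc (cell (T ∘ ⇑g) i).card = ((cell (T ∘ ⇑g) i).map g.toEmbedding).card :=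
        (Finset.card_map _).symm
    _ = (cell T i).card := by rw [cell_comp_map]
    _ = lam i := hT i

/-- The type of `λ`-tabloids. -/
abbrev Tab (d n : ℕ) (lam : Fin n → ℕ) := {T : Fin d → Fin n // IsTabloid lam T}

/-- The right action of `g ∈ S_d` on the permutation module `M^λ`,
sending a tabloid `T` to `T ∘ g`. -/
noncomputable def ractT {d n : ℕ} (lam : Fin n → ℕ) (g : Equiv.Perm (Fin d)) :
    (Tab d n lam →₀ ℂ) →ₗ[ℂ] (Tab d n lam →₀ ℂ) :=
  Finsupp.lmapDomain ℂ ℂ fun T => ⟨T.1 ∘ ⇑g, T.2.comp g⟩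

/-! ### Auxiliary material -/

noncomputable instance {d n : ℕ} (lam : Fin n → ℕ) : Fintype (Tab d n lam) :=
  Fintype.ofFinite _

/-- The trace of `lmapDomain` of a self-map is the number of its fixed points. -/
lemma trace_lmapDomain {α : Type*} [Fintype α] [DecidableEq α] (f : α → α) :
    LinearMap.trace ℂ (α →₀ ℂ) (Finsupp.lmapDomain ℂ ℂ f)
      = ((Finset.univ.filter fun a => f a = a).card : ℂ) := by
  rw [LinearMap.trace_eq_matrix_trace ℂ (Finsupp.basisSingleOne) _, Matrix.trace]
  have h : ∀ a : α, (LinearMap.toMatrix Finsupp.basisSingleOne Finsupp.basisSingleOne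
      (Finsupp.lmapDomain ℂ ℂ f)).diag a = if f a = a then 1 else 0 := by
    intro a
    simp [Matrix.diag, LinearMap.toMatrix_apply, Finsupp.single_apply]
  rw [Finset.sum_congr rfl (fun a _ => h a), Finset.card_filter]
  push_cast
  rfl

/-- The trace of the right action of `g` on `M^λ` counts the `g`-fixed tabloids. -/
lemma trace_ractT {d n : ℕ} (lam : Fin n → ℕ) (g : Equiv.Perm (Fin d)) :
    LinearMap.trace ℂ _ (ractT lam g)
      = ((Finset.univ.filter fun T : Tab d n lam => T.1 ∘ ⇑g = T.1).card : ℂ) := by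
  classical
  rw [ractT, trace_lmapDomain]
  congr 2
  apply Finset.filter_congr
  intro T _
  simp [Subtype.ext_iff]

/-- An equivariant isomorphism forces equal numbers of `g`-fixed tabloids. -/
lemma card_fixed_eq {d n n' : ℕ} (lam : Fin n → ℕ) (lam' : Fin n' → ℕ)
    (Φ : (Tab d n lam →₀ ℂ) ≃ₗ[ℂ] (Tab d n' lam' →₀ ℂ))
    (hΦ : ∀ (v : Tab d n lam →₀ ℂ) (g : Equiv.Perm (Fin d)),
      Φ (ractT lam g v) = ractT lam' g (Φ v)) (g : Equiv.Perm (Fin d)) :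
    (Finset.univ.filter fun T : Tab d n lam => T.1 ∘ ⇑g = T.1).card
      = (Finset.univ.filter fun T : Tab d n' lam' => T.1 ∘ ⇑g = T.1).card := by
  have hconj : Φ.conj (ractT lam g) = ractT lam' g := by
    ext w
    rw [LinearEquiv.conj_apply]
    simp only [LinearMap.coe_comp, Function.comp_apply, LinearEquiv.coe_coe]
    rw [hΦ, Φ.apply_symm_apply]
  have htr : LinearMap.trace ℂ _ (ractT lam g) = LinearMap.trace ℂ _ (ractT lam' g) := by
    rw [← hconj, LinearMap.trace_conj']
  rw [trace_ractT, trace_ractT] at htr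
  exact_mod_cast htr

noncomputable def sigEquiv {d n : ℕ} (lam : Fin n → ℕ) (hlam : ∑ i, lam i = d) :
    (Σ i : Fin n, Fin (lam i)) ≃ Fin d :=
  (Fintype.equivFin _).trans (finCongr (by simp [hlam]))

noncomputable def rotC (m : ℕ) (hm : 0 < m) : Equiv.Perm (Fin m) :=
  haveI : NeZero m := ⟨hm.ne'⟩
  Equiv.addRight 1

/-- A permutation of `Fin d` whose cycles are exactly the blocks of the composition `lam`. -/
noncomputable def gperm {d n : ℕ} (lam : Fin n → ℕ) (hlam : ∑ i, lam i = d)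
    (hpos : ∀ i, 0 < lam i) : Equiv.Perm (Fin d) :=
  (sigEquiv lam hlam).permCongr (Equiv.sigmaCongrRight fun i => rotC (lam i) (hpos i))

lemma gperm_apply {d n : ℕ} (lam : Fin n → ℕ) (hlam : ∑ i, lam i = d)
    (hpos : ∀ i, 0 < lam i) (p : Σ i : Fin n, Fin (lam i)) :
    gperm lam hlam hpos (sigEquiv lam hlam p)
      = sigEquiv lam hlam ⟨p.1, rotC (lam p.1) (hpos p.1) p.2⟩ := by
  simp [gperm, Equiv.sigmaCongrRight]

lemma card_sigma_fiber {n : ℕ} (lam : Fin n → ℕ) {γ : Type*} [DecidableEq γ]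
    (f : Fin n → γ) (j : γ) :
    Fintype.card {p : Σ i : Fin n, Fin (lam i) // f p.1 = j}
      = ∑ i ∈ Finset.univ.filter (fun i => f i = j), lam i := by
  have e : {p : Σ i : Fin n, Fin (lam i) // f p.1 = j}
      ≃ Σ i : {i : Fin n // f i = j}, Fin (lam i.1) :=
    { toFun := fun q => ⟨⟨q.1.1, q.2⟩, q.1.2⟩
      invFun := fun s => ⟨⟨s.1.1, s.2⟩, s.1.2⟩
      left_inv := fun q => rfl
      right_inv := fun s => rfl }
  rw [Fintype.card_congr e, Fintype.card_sigma]
  simp only [Fintype.card_fin]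
  exact (Finset.sum_subtype _ (fun x => by simp) _).symm

lemma cell_card_eq {d n m : ℕ} (lam : Fin n → ℕ) (hlam : ∑ i, lam i = d)
    (T : Fin d → Fin m) (j : Fin m) :
    (cell T j).card
      = Fintype.card {p : Σ i : Fin n, Fin (lam i) // T (sigEquiv lam hlam p) = j} := by
  rw [show (cell T j).card = Fintype.card {x : Fin d // T x = j} from
    (Fintype.card_subtype _).symm]
  exact (Fintype.card_congr ((sigEquiv lam hlam).subtypeEquiv (fun p => Iff.rfl))).symm

open Fin.NatCast Fin.CommRing in
lemma fixed_const_on_block {d n m' : ℕ} (lam : Fin n → ℕ) (hlam : ∑ i, lam i = d)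
    (hpos : ∀ i, 0 < lam i) (T : Fin d → Fin m')
    (hfix : T ∘ ⇑(gperm lam hlam hpos) = T) (i : Fin n) (x : Fin (lam i)) :
    T (sigEquiv lam hlam ⟨i, x⟩) = T (sigEquiv lam hlam ⟨i, ⟨0, hpos i⟩⟩) := by
  haveI : NeZero (lam i) := ⟨(hpos i).ne'⟩
  have step : ∀ y : Fin (lam i),
      T (sigEquiv lam hlam ⟨i, y + 1⟩) = T (sigEquiv lam hlam ⟨i, y⟩) := by
    intro y
    conv_rhs => rw [← hfix]
    rw [Function.comp_apply, gperm_apply]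
    rfl
  have key : ∀ k : ℕ, T (sigEquiv lam hlam ⟨i, (k : Fin (lam i))⟩)
      = T (sigEquiv lam hlam ⟨i, ⟨0, hpos i⟩⟩) := by
    intro k
    induction k with
    | zero =>
        have h0 : ((0 : ℕ) : Fin (lam i)) = ⟨0, hpos i⟩ := by ext; simp
        rw [h0]
    | succ k ih =>
        rw [show ((k + 1 : ℕ) : Fin (lam i)) = (k : Fin (lam i)) + 1 by push_cast; ring,
          step, ih]
  have hx := key x.val
  rwa [Fin.cast_val_eq_self] at hx

/-- Any tabloid of shape `lam'` fixed by `gperm lam` induces a map assembling the parts of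
`lam` into the parts of `lam'`. -/
lemma fixed_gives_f {d n m' : ℕ} (lam : Fin n → ℕ) (lam' : Fin m' → ℕ)
    (hlam : ∑ i, lam i = d) (hpos : ∀ i, 0 < lam i)
    (T : Fin d → Fin m') (htab : IsTabloid lam' T)
    (hfix : T ∘ ⇑(gperm lam hlam hpos) = T) :
    ∃ f : Fin n → Fin m',
      ∀ j, lam' j = ∑ i ∈ Finset.univ.filter (fun i => f i = j), lam i := by
  refine ⟨fun i => T (sigEquiv lam hlam ⟨i, ⟨0, hpos i⟩⟩), fun j => ?_⟩
  rw [← htab j, cell_card_eq lam hlam, ← card_sigma_fiber]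
  apply Fintype.card_congr
  apply Equiv.subtypeEquivRight
  rintro ⟨i, x⟩
  rw [fixed_const_on_block lam hlam hpos T hfix i x]

lemma T0_tabloid {d n : ℕ} (lam : Fin n → ℕ) (hlam : ∑ i, lam i = d) :
    IsTabloid lam (fun x => ((sigEquiv lam hlam).symm x).1) := by
  intro j
  rw [cell_card_eq lam hlam]
  have h : Fintype.card {p : Σ i : Fin n, Fin (lam i) //
      (fun x => ((sigEquiv lam hlam).symm x).1) (sigEquiv lam hlam p) = j}
      = Fintype.card {p : Σ i : Fin n, Fin (lam i) // id p.1 = j} := by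
    apply Fintype.card_congr
    apply Equiv.subtypeEquivRight
    intro p
    simp
  rw [h, card_sigma_fiber lam id j]
  simp [Finset.filter_eq']

lemma T0_fixed {d n : ℕ} (lam : Fin n → ℕ) (hlam : ∑ i, lam i = d)
    (hpos : ∀ i, 0 < lam i) :
    (fun x => ((sigEquiv lam hlam).symm x).1) ∘ ⇑(gperm lam hlam hpos)
      = fun x => ((sigEquiv lam hlam).symm x).1 := by
  funext x
  have h := gperm_apply lam hlam hpos ((sigEquiv lam hlam).symm x)
  rw [Equiv.apply_symm_apply] at h
  simp only [Function.comp_apply, h, Equiv.symm_apply_apply]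

/-- From an equivariant isomorphism, produce a surjection assembling the parts
of `lam` into the parts of `lam'`. -/
lemma exists_surj {d n n' : ℕ} (lam : Fin n → ℕ) (lam' : Fin n' → ℕ)
    (hlam : ∑ i, lam i = d) (hpos : ∀ i, 0 < lam i) (hpos' : ∀ i, 0 < lam' i)
    (hcard : ∀ g : Equiv.Perm (Fin d),
      (Finset.univ.filter fun T : Tab d n lam => T.1 ∘ ⇑g = T.1).card
        = (Finset.univ.filter fun T : Tab d n' lam' => T.1 ∘ ⇑g = T.1).card) :
    ∃ f : Fin n → Fin n', Function.Surjective f ∧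
      ∀ j, lam' j = ∑ i ∈ Finset.univ.filter (fun i => f i = j), lam i := by
  classical
  set g := gperm lam hlam hpos with hg
  have h0 : (Finset.univ.filter fun T : Tab d n lam => T.1 ∘ ⇑g = T.1).Nonempty :=
    ⟨⟨_, T0_tabloid lam hlam⟩, by
      simp only [Finset.mem_filter, Finset.mem_univ, true_and]
      exact T0_fixed lam hlam hpos⟩
  have h1 : (Finset.univ.filter fun T : Tab d n' lam' => T.1 ∘ ⇑g = T.1).Nonempty := by
    rw [← Finset.card_pos, ← hcard g]
    exact Finset.card_pos.mpr h0
  obtain ⟨T, hT⟩ := h1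
  simp only [Finset.mem_filter, Finset.mem_univ, true_and] at hT
  obtain ⟨f, hf⟩ := fixed_gives_f lam lam' hlam hpos T.1 T.2 hT
  refine ⟨f, fun j => ?_, hf⟩
  by_contra hj
  push_neg at hj
  have hemp : Finset.univ.filter (fun i => f i = j) = ∅ :=
    Finset.filter_eq_empty_iff.mpr (fun i _ => hj i)
  have h2 := hf j
  rw [hemp, Finset.sum_empty] at h2
  exact absurd h2 (hpos' j).ne'

lemma cell_equiv_comp {d n n' : ℕ} (τ : Fin n ≃ Fin n') (T : Fin d → Fin n) (j : Fin n') :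
    cell (⇑τ ∘ T) j = cell T (τ.symm j) := by
  ext x
  simp [cell, Equiv.apply_eq_iff_eq_symm_apply]

/-- The equivalence of tabloid types induced by a rearrangement. -/
def tabEquiv {d n n' : ℕ} (lam : Fin n → ℕ) (lam' : Fin n' → ℕ)
    (σ : Fin n' ≃ Fin n) (hσ : ∀ i, lam' i = lam (σ i)) :
    Tab d n lam ≃ Tab d n' lam' where
  toFun T := ⟨⇑σ.symm ∘ T.1, by
    intro j
    rw [cell_equiv_comp, Equiv.symm_symm, T.2, hσ]⟩
  invFun T' := ⟨⇑σ ∘ T'.1, by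
    intro j
    rw [cell_equiv_comp, T'.2, hσ, Equiv.apply_symm_apply]⟩
  left_inv T := by
    apply Subtype.ext
    funext x
    simp
  right_inv T' := by
    apply Subtype.ext
    funext x
    simp

/-- for compositions `λ` of `d` into `n` strictly positive parts and `λ'`
of `d` into `n'` strictly positive parts, the permutation modules `M^λ` and `M^{λ'}` are
isomorphic as right `ℂ[S_d]`-modules if and only if `n = n'` and `λ'` is a rearrangement
of `λ`. -/
theorem stmt18 (d n n' : ℕ) (lam : Fin n → ℕ) (lam' : Fin n' → ℕ)
    (hlam : ∑ i, lam i = d) (hlam' : ∑ i, lam' i = d)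
    (hpos : ∀ i, 0 < lam i) (hpos' : ∀ i, 0 < lam' i) :
    (∃ Φ : (Tab d n lam →₀ ℂ) ≃ₗ[ℂ] (Tab d n' lam' →₀ ℂ),
      ∀ (v : Tab d n lam →₀ ℂ) (g : Equiv.Perm (Fin d)),
        Φ (ractT lam g v) = ractT lam' g (Φ v)) ↔
    ∃ σ : Fin n' ≃ Fin n, ∀ i, lam' i = lam (σ i) := by
  classical
  constructor
  · rintro ⟨Φ, hΦ⟩
    have hcard := card_fixed_eq lam lam' Φ hΦ
    obtain ⟨f, hfsurj, hf⟩ := exists_surj lam lam' hlam hpos hpos' hcard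
    obtain ⟨f', hf'surj, _⟩ := exists_surj lam' lam hlam' hpos' hpos (fun g => (hcard g).symm)
    have hn : n' ≤ n := by simpa using Fintype.card_le_of_surjective f hfsurj
    have hn' : n ≤ n' := by simpa using Fintype.card_le_of_surjective f' hf'surj
    have hbij : Function.Bijective f := by
      rw [Fintype.bijective_iff_surjective_and_card]
      refine ⟨hfsurj, ?_⟩
      simp only [Fintype.card_fin]
      omega
    refine ⟨(Equiv.ofBijective f hbij).symm, fun j => ?_⟩
    have hfσ : f ((Equiv.ofBijective f hbij).symm j) = j :=
      (Equiv.ofBijective f hbij).apply_symm_apply j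
    have hfil : Finset.univ.filter (fun i => f i = j) = {(Equiv.ofBijective f hbij).symm j} := by
      ext i
      simp only [Finset.mem_filter, Finset.mem_univ, true_and, Finset.mem_singleton]
      constructor
      · intro h; exact hbij.1 (h.trans hfσ.symm)
      · rintro rfl; exact hfσ
    rw [hf j, hfil, Finset.sum_singleton]
  · rintro ⟨σ, hσ⟩
    refine ⟨Finsupp.domLCongr (tabEquiv lam lam' σ hσ), fun v g => ?_⟩
    induction v using Finsupp.induction_linear with
    | zero => simp
    | add u w hu hw => simp only [map_add, hu, hw]
    | single T b =>
        rw [show ractT lam g (Finsupp.single T b)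
            = Finsupp.single (⟨T.1 ∘ ⇑g, T.2.comp g⟩ : Tab d n lam) b from
          Finsupp.mapDomain_single]
        rw [Finsupp.domLCongr_single, Finsupp.domLCongr_single]
        rw [show ractT lam' g (Finsupp.single (tabEquiv lam lam' σ hσ T) b)
            = Finsupp.single (⟨(tabEquiv lam lam' σ hσ T).1 ∘ ⇑g,
                (tabEquiv lam lam' σ hσ T).2.comp g⟩ : Tab d n' lam') b from
          Finsupp.mapDomain_single]
        congr 1
end
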